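/- Let (X,d,W) be a UCW-hyperbolic space with monotone modulus of uniform convexity η, C ⊆ X a nonempty convex subset, T : C → C nonexpansive with a fixed point, (λ_n),(s_n) sequences in [0,1], and (x_n) the Ishikawa iteration starting with x ∈ C. Suppose θ : ℕ → ℕ is a rate of divergence for Σ_{n=0}^∞ λ_n(1−λ_n), b > 0 satisfies b ≥ d(x,p) for some fixed point p of T, and L, N_0 ∈ ℕ are such that s_n ≤ 1 − 1/L for all n ≥ N_0. Then for all ε > 0 and k ∈ ℕ there exists N ∈ ℕ with k ≤ N ≤ Ψ(ε,k,η,b,θ,L,N_0) and d(x_N, Tx_N) < ε, where Ψ(ε,k,η,b,θ,L,N_0) := h(ε/L, k+N_0, η, b, θ) and h(ε,k,η,b,θ) := θ(⌈(b+1)/(ε·η(b, ε/b))⌉ + k) if ε ≤ 2b, h(ε,k,η,b,θ) := k otherwise. In particular liminf_{n→∞} d(x_n, Tx_n) = 0. -/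
import Mathlib


open Set Filter Metric Bornology Function

/-- A `W`-hyperbolic space structure on a metric space `X` (Kohlenbach).
`W x y l` denotes `(1-l)x ⊕ l y`. -/
structure WHyp (X : Type*) [MetricSpace X] where
  W : X → X → ℝ → X
  W1 : ∀ (x y z : X), ∀ l ∈ Set.Icc (0:ℝ) 1,
    dist z (W x y l) ≤ (1 - l) * dist z x + l * dist z y
  W2 : ∀ (x y : X), ∀ l ∈ Set.Icc (0:ℝ) 1, ∀ l' ∈ Set.Icc (0:ℝ) 1,
    dist (W x y l) (W x y l') = |l - l'| * dist x y
  W3 : ∀ (x y : X), ∀ l ∈ Set.Icc (0:ℝ) 1, W x y l = W y x (1 - l)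
  W4 : ∀ (x y z w : X), ∀ l ∈ Set.Icc (0:ℝ) 1,
    dist (W x z l) (W y w l) ≤ (1 - l) * dist x y + l * dist z w

/-- `η` is a modulus of uniform convexity for the `W`-hyperbolic space `H`. -/
def WHyp.UnifConvex {X : Type*} [MetricSpace X] (H : WHyp X) (η : ℝ → ℝ → ℝ) : Prop :=
  (∀ r ε : ℝ, 0 < r → ε ∈ Set.Ioc (0:ℝ) 2 → η r ε ∈ Set.Ioc (0:ℝ) 1) ∧
  (∀ (r ε : ℝ) (a x y : X), 0 < r → ε ∈ Set.Ioc (0:ℝ) 2 →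
    dist x a ≤ r → dist y a ≤ r → ε * r ≤ dist x y →
    dist (H.W x y (1/2)) a ≤ (1 - η r ε) * r)

/-- A modulus of uniform convexity is monotone if it decreases in `r` for fixed `ε`. -/
def MonotoneModulus (η : ℝ → ℝ → ℝ) : Prop :=
  ∀ r s ε : ℝ, 0 < r → r ≤ s → ε ∈ Set.Ioc (0:ℝ) 2 → η s ε ≤ η r ε

/-- A subset `C` is convex in the `W`-hyperbolic space `H`. -/
def WHyp.ConvexSet {X : Type*} [MetricSpace X] (H : WHyp X) (C : Set X) : Prop :=
  ∀ x ∈ C, ∀ y ∈ C, ∀ l ∈ Set.Icc (0:ℝ) 1, H.W x y l ∈ C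

/-- The Ishikawa iteration: `x₀ = x`,
`x_{n+1} = (1-λ_n)x_n ⊕ λ_n T((1-s_n)x_n ⊕ s_n T x_n)`. -/
def WHyp.ishSeq {X : Type*} [MetricSpace X] (H : WHyp X) (T : X → X) (l s : ℕ → ℝ)
    (x : X) : ℕ → X
  | 0 => x
  | n + 1 =>
      H.W (H.ishSeq T l s x n)
        (T (H.W (H.ishSeq T l s x n) (T (H.ishSeq T l s x n)) (s n))) (l n)

/-- The bound `h(ε,k,η,b,θ)` from Proposition 4.4 of the paper. -/
noncomputable def hRate (η : ℝ → ℝ → ℝ) (b : ℝ) (θ : ℕ → ℕ) (ε : ℝ) (k : ℕ) : ℕ :=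
  if ε ≤ 2 * b then θ (⌈(b + 1) / (ε * η b (ε / b))⌉₊ + k) else k

namespace WHyp
variable {X : Type*} [MetricSpace X]

lemma W_zero (H : WHyp X) (x y : X) : H.W x y 0 = x := by
  have h := H.W1 x y x 0 ⟨le_refl 0, zero_le_one⟩
  simp at h
  exact h.symm

lemma W_one (H : WHyp X) (x y : X) : H.W x y 1 = y := by
  have h := H.W1 x y y 1 ⟨zero_le_one, le_refl 1⟩
  simp at h
  exact h.symm

lemma dist_left (H : WHyp X) (x y : X) {l : ℝ} (hl : l ∈ Set.Icc (0:ℝ) 1) :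
    dist x (H.W x y l) = l * dist x y := by
  have h := H.W2 x y l hl 0 ⟨le_refl 0, zero_le_one⟩
  rw [H.W_zero] at h
  rw [dist_comm]
  simpa [abs_of_nonneg hl.1] using h

lemma dist_right (H : WHyp X) (x y : X) {l : ℝ} (hl : l ∈ Set.Icc (0:ℝ) 1) :
    dist y (H.W x y l) = (1 - l) * dist x y := by
  have h := H.W2 x y l hl 1 ⟨zero_le_one, le_refl 1⟩
  rw [H.W_one] at h
  rw [dist_comm]
  have : |l - 1| = 1 - l := by
    rw [abs_of_nonpos (by linarith [hl.2])]; ring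
  rw [this] at h
  exact h

/-- Segment identity, valid in uniformly convex W-hyperbolic spaces. -/
lemma seg (H : WHyp X) (η : ℝ → ℝ → ℝ) (hU : H.UnifConvex η) (x y : X)
    {a b : ℝ} (ha : a ∈ Set.Icc (0:ℝ) 1) (hb : b ∈ Set.Icc (0:ℝ) 1) :
    H.W x (H.W x y b) a = H.W x y (a * b) := by
  have hab : a * b ∈ Set.Icc (0:ℝ) 1 :=
    ⟨mul_nonneg ha.1 hb.1, by nlinarith [ha.1, ha.2, hb.1, hb.2]⟩
  set D := dist x y with hD
  set u := H.W x y b with hu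
  set z1 := H.W x y (a*b) with hz1
  set z2 := H.W x u a with hz2
  have d1x : dist x z1 = a*b*D := H.dist_left x y hab
  have d1y : dist y z1 = (1-a*b)*D := H.dist_right x y hab
  have dxu : dist x u = b*D := H.dist_left x y hb
  have d2x : dist x z2 = a*(b*D) := by rw [H.dist_left x u ha, dxu]
  have duy : dist y u = (1-b)*D := H.dist_right x y hb
  have d2y : dist y z2 ≤ (1-a*b)*D := by
    have h := H.W1 x u y a ha
    rw [duy, dist_comm y x, ← hD] at h
    calc dist y z2 ≤ (1-a)*D + a*((1-b)*D) := h
    _ = (1-a*b)*D := by ring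
  have habD : 0 ≤ a*b*D := by
    have := dist_nonneg (x := x) (y := y)
    rw [← hD] at this
    exact mul_nonneg (mul_nonneg ha.1 hb.1) this
  rcases habD.eq_or_lt with h0 | hpos
  · have e1 : dist x z1 = 0 := by rw [d1x, ← h0]
    have e2 : dist x z2 = 0 := by rw [d2x, ← mul_assoc, ← h0]
    show z2 = z1
    have t := dist_triangle z2 x z1
    rw [dist_comm z2 x] at t
    have : dist z2 z1 = 0 := le_antisymm (by linarith) dist_nonneg
    exact dist_eq_zero.mp this
  · show z2 = z1
    by_contra hne
    have hδ : 0 < dist z1 z2 := dist_pos.mpr (Ne.symm hne)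
    set r := a*b*D with hr
    set δ := dist z1 z2 with hδdef
    have hδ2r : δ ≤ 2*r := by
      have := dist_triangle z1 x z2
      rw [dist_comm z1 x] at this
      nlinarith [d1x, d2x]
    have hεIoc : δ/r ∈ Set.Ioc (0:ℝ) 2 := ⟨div_pos hδ hpos, by rw [div_le_iff₀ hpos]; linarith⟩
    have hz1r : dist z1 x ≤ r := by rw [dist_comm, d1x]
    have hz2r : dist z2 x ≤ r := le_of_eq (by rw [dist_comm, d2x, hr, mul_assoc])
    have hδr : (δ/r) * r ≤ dist z1 z2 := le_of_eq (div_mul_cancel₀ _ (ne_of_gt hpos))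
    have hm := hU.2 r (δ/r) x z1 z2 hpos hεIoc hz1r hz2r hδr
    have hη := (hU.1 r (δ/r) hpos hεIoc).1
    have hmy := H.W1 z1 z2 y (1/2) (by norm_num)
    have htr := dist_triangle x (H.W z1 z2 (1/2)) y
    have e3 : dist x (H.W z1 z2 (1/2)) = dist (H.W z1 z2 (1/2)) x := dist_comm _ _
    have e4 : dist (H.W z1 z2 (1/2)) y = dist y (H.W z1 z2 (1/2)) := dist_comm _ _
    nlinarith [d1y, d2y, mul_pos hη hpos]


lemma ucHalf (H : WHyp X) (η : ℝ → ℝ → ℝ) (hU : H.UnifConvex η) {r ε : ℝ} (a x y : X)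
    (hr : 0 < r) (hε : ε ∈ Set.Ioc (0:ℝ) 2) (hx : dist x a ≤ r) (hy : dist y a ≤ r)
    (hxy : ε * r ≤ dist x y) {l : ℝ} (hl0 : 0 ≤ l) (hl2 : l ≤ 1/2) :
    dist (H.W x y l) a ≤ (1 - 2 * l * η r ε) * r := by
  have hηpos := (hU.1 r ε hr hε).1
  have hm := hU.2 r ε a x y hr hε hx hy hxy
  have h2l : (2*l) ∈ Set.Icc (0:ℝ) 1 := ⟨by linarith, by linarith⟩
  have hseg := H.seg η hU x y h2l (by norm_num : (1/2:ℝ) ∈ Set.Icc (0:ℝ) 1)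
  have heq : (2*l) * (1/2 : ℝ) = l := by ring
  rw [heq] at hseg
  have hW1 := H.W1 x (H.W x y (1/2)) a (2*l) h2l
  rw [hseg] at hW1
  have e1 : dist a (H.W x y l) = dist (H.W x y l) a := dist_comm _ _
  have e2 : dist a x = dist x a := dist_comm _ _
  have e3 : dist a (H.W x y (1/2)) = dist (H.W x y (1/2)) a := dist_comm _ _
  rw [e1, e2, e3] at hW1
  nlinarith [mul_le_mul_of_nonneg_left hx (by linarith : (0:ℝ) ≤ 1-2*l),
    mul_le_mul_of_nonneg_left hm (by linarith : (0:ℝ) ≤ 2*l)]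

lemma ucLambda (H : WHyp X) (η : ℝ → ℝ → ℝ) (hU : H.UnifConvex η) {r ε : ℝ} (a x y : X)
    (hr : 0 < r) (hε : ε ∈ Set.Ioc (0:ℝ) 2) (hx : dist x a ≤ r) (hy : dist y a ≤ r)
    (hxy : ε * r ≤ dist x y) {l : ℝ} (hl : l ∈ Set.Icc (0:ℝ) 1) :
    dist (H.W x y l) a ≤ (1 - 2 * min l (1-l) * η r ε) * r := by
  rcases le_or_gt l (1/2) with h | h
  · rw [min_eq_left (by linarith)]
    exact H.ucHalf η hU a x y hr hε hx hy hxy hl.1 h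
  · rw [min_eq_right (by linarith), H.W3 x y l hl]
    exact H.ucHalf η hU a y x hr hε hy hx (by rwa [dist_comm]) (by linarith [hl.2])
      (by linarith)

end WHyp

set_option maxHeartbeats 1000000 in
theorem stmt18 {X : Type*} [MetricSpace X] (H : WHyp X)
    (η : ℝ → ℝ → ℝ) (hU : H.UnifConvex η) (hmon : MonotoneModulus η)
    (C : Set X) (hCne : C.Nonempty) (hCconv : H.ConvexSet C)
    (T : X → X) (hT : Set.MapsTo T C C)
    (hTne : ∀ x ∈ C, ∀ y ∈ C, dist (T x) (T y) ≤ dist x y)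
    (l s : ℕ → ℝ) (hl : ∀ n, l n ∈ Set.Icc (0:ℝ) 1) (hs : ∀ n, s n ∈ Set.Icc (0:ℝ) 1)
    (x : X) (hx : x ∈ C)
    (xs : ℕ → X) (hxs : xs = H.ishSeq T l s x)
    (ys : ℕ → X) (hys : ∀ n, ys n = H.W (xs n) (T (xs n)) (s n))
    (θ : ℕ → ℕ)
    (hθ : ∀ n : ℕ, (n : ℝ) ≤ ∑ i ∈ Finset.range (θ n + 1), l i * (1 - l i))
    (b : ℝ) (hb : 0 < b) (hbp : ∃ p ∈ C, T p = p ∧ dist x p ≤ b)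
    (L N₀ : ℕ) (hL : 1 ≤ L) (hsL : ∀ n ≥ N₀, s n ≤ 1 - 1 / (L : ℝ)) :
    (∀ ε : ℝ, 0 < ε → ∀ k : ℕ, ∃ N : ℕ, k ≤ N ∧ N ≤ hRate η b θ (ε / L) (k + N₀) ∧
      dist (xs N) (T (xs N)) < ε) ∧
    Filter.liminf (fun n => dist (xs n) (T (xs n))) Filter.atTop = 0 := by
  obtain ⟨p, hpC, hTp, hpb⟩ := hbp
  have hxs0 : xs 0 = x := by rw [hxs]; simp only [WHyp.ishSeq]
  have hrec : ∀ n, xs (n+1) = H.W (xs n) (T (ys n)) (l n) := by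
    intro n; rw [hys, hxs]; simp only [WHyp.ishSeq]
  have hxsC : ∀ n, xs n ∈ C := by
    intro n
    induction n with
    | zero => rw [hxs0]; exact hx
    | succ n ih =>
      have hyC : ys n ∈ C := by
        rw [hys]; exact hCconv _ ih _ (hT ih) _ (hs n)
      rw [hrec n]; exact hCconv _ ih _ (hT hyC) _ (hl n)
  have hysC : ∀ n, ys n ∈ C := fun n => by
    rw [hys]; exact hCconv _ (hxsC n) _ (hT (hxsC n)) _ (hs n)
  have hTxp : ∀ z ∈ C, dist (T z) p ≤ dist z p := by
    intro z hz
    have := hTne z hz p hpC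
    rwa [hTp] at this
  have hyp_le : ∀ n, dist (ys n) p ≤ dist (xs n) p := by
    intro n
    have hW := H.W1 (xs n) (T (xs n)) p (s n) (hs n)
    have hTx := hTxp _ (hxsC n)
    rw [dist_comm p (xs n), dist_comm p (T (xs n))] at hW
    have h4 : 0 ≤ s n * (dist (xs n) p - dist (T (xs n)) p) :=
      mul_nonneg (hs n).1 (by linarith)
    have e3 : dist (ys n) p = dist p (H.W (xs n) (T (xs n)) (s n)) := by
      rw [hys, dist_comm]
    rw [e3]
    linarith [hW, h4]
  have hTyp : ∀ n, dist (T (ys n)) p ≤ dist (xs n) p :=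
    fun n => le_trans (hTxp _ (hysC n)) (hyp_le n)
  have hdec : ∀ n, dist (xs (n+1)) p ≤ dist (xs n) p := by
    intro n
    have hW := H.W1 (xs n) (T (ys n)) p (l n) (hl n)
    rw [dist_comm p (xs n), dist_comm p (T (ys n))] at hW
    have h4 : 0 ≤ l n * (dist (xs n) p - dist (T (ys n)) p) :=
      mul_nonneg (hl n).1 (by linarith [hTyp n])
    rw [hrec n, dist_comm]
    nlinarith [hW]
  have hpball : ∀ n, dist (xs n) p ≤ b := by
    intro n; induction n with
    | zero => rw [hxs0]; exact hpb
    | succ n ih => exact le_trans (hdec n) ih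
  have hfle : ∀ n, dist (xs n) (T (xs n)) ≤ 2*b := by
    intro n
    have ht := dist_triangle (xs n) p (T (xs n))
    have h2 : dist p (T (xs n)) = dist (T (xs n)) p := dist_comm _ _
    linarith [hTxp _ (hxsC n), hpball n]
  have hLpos : (0:ℝ) < (L:ℝ) := by exact_mod_cast Nat.lt_of_lt_of_le Nat.zero_lt_one hL
  have hgnn : ∀ i : ℕ, 0 ≤ l i * (1 - l i) :=
    fun i => mul_nonneg (hl i).1 (by linarith [(hl i).2])
  have hrangeK : ∀ K : ℕ, ∑ i ∈ Finset.range K, l i * (1 - l i) ≤ (K:ℝ) := by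
    intro K
    calc ∑ i ∈ Finset.range K, l i * (1-l i) ≤ ∑ i ∈ Finset.range K, 1 :=
          Finset.sum_le_sum (fun i _ => by nlinarith [(hl i).1, (hl i).2])
    _ = K := by simp
  have main : ∀ ε : ℝ, 0 < ε → ∀ k : ℕ, ∃ N : ℕ, k ≤ N ∧
      N ≤ hRate η b θ (ε / L) (k + N₀) ∧ dist (xs N) (T (xs N)) < ε := by
    intro ε hε k
    have hε' : 0 < ε / (L:ℝ) := div_pos hε hLpos
    by_cases hcase : ε / (L:ℝ) ≤ 2*b
    · set ε' := ε / (L:ℝ) with hε'def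
      set ε₀ := ε' / b with hε₀def
      have hε₀Ioc : ε₀ ∈ Set.Ioc (0:ℝ) 2 :=
        ⟨div_pos hε' hb, by rw [hε₀def, div_le_iff₀ hb]; linarith⟩
      have hηb := (hU.1 b ε₀ hb hε₀Ioc).1
      set K := k + N₀ with hK
      set M := ⌈(b+1)/(ε' * η b ε₀)⌉₊ with hM
      set Nb := θ (M + K) with hNbdef
      have hrate : hRate η b θ ε' K = Nb := by rw [hRate, if_pos hcase]
      by_contra hcon
      push_neg at hcon
      have hcon' : ∀ n, K ≤ n → n ≤ Nb → ε ≤ dist (xs n) (T (xs n)) := by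
        intro n h1 h2
        exact hcon n (le_trans (Nat.le_add_right k N₀) h1) (by rw [hrate]; exact h2)
      have hstep : ∀ n, K ≤ n → n ≤ Nb →
          dist (xs (n+1)) p + (l n * (1 - l n)) * (η b ε₀ * ε') ≤ dist (xs n) p := by
        intro n h1 h2
        have hdfε : ε ≤ dist (xs n) (T (xs n)) := hcon' n h1 h2
        set d := dist (xs n) (T (xs n)) with hd
        set r := dist (xs n) p with hr
        have hsn := hsL n (le_trans (Nat.le_add_left N₀ k) h1)
        have h1' : dist (ys n) (xs n) = s n * d := by
          rw [hys, dist_comm]; exact H.dist_left _ _ (hs n)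
        have h2' : dist (T (ys n)) (T (xs n)) ≤ dist (ys n) (xs n) :=
          hTne _ (hysC n) _ (hxsC n)
        have h3 : d ≤ dist (xs n) (T (ys n)) + s n * d := by
          have := dist_triangle (xs n) (T (ys n)) (T (xs n))
          linarith [h1' ▸ h2']
        have hdpos : 0 < d := lt_of_lt_of_le hε hdfε
        have h4 : ε' ≤ dist (xs n) (T (ys n)) := by
          have hsd : s n * d ≤ (1 - 1/(L:ℝ)) * d :=
            mul_le_mul_of_nonneg_right hsn hdpos.le
          have h5 : (1/(L:ℝ)) * d ≤ dist (xs n) (T (ys n)) := by linarith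
          have h6 : ε' ≤ (1/(L:ℝ)) * d := by
            rw [hε'def]
            have := (div_le_div_iff_of_pos_right hLpos).mpr hdfε
            linarith [this, (by ring : d / (L:ℝ) = (1/(L:ℝ)) * d)]
          linarith
        have hTy := hTyp n
        have h2r : ε' ≤ 2*r := by
          have ht := dist_triangle (xs n) p (T (ys n))
          have e : dist p (T (ys n)) = dist (T (ys n)) p := dist_comm _ _
          linarith
        have hrpos : 0 < r := by linarith
        have hε₀r : ε₀ * r ≤ dist (xs n) (T (ys n)) := by
          have h5 : ε₀ * r ≤ ε₀ * b := mul_le_mul_of_nonneg_left (hpball n) hε₀Ioc.1.le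
          have h6 : ε₀ * b = ε' := div_mul_cancel₀ _ (ne_of_gt hb)
          linarith
        have huc := H.ucLambda η hU p (xs n) (T (ys n)) hrpos hε₀Ioc (le_refl r)
          hTy hε₀r (hl n)
        have hmon' : η b ε₀ ≤ η r ε₀ := hmon r b ε₀ hrpos (hpball n) hε₀Ioc
        have hminge : l n * (1 - l n) ≤ min (l n) (1 - l n) := by
          rcases le_total (l n) (1 - l n) with h | h
          · rw [min_eq_left h]; nlinarith [(hl n).1, (hl n).2]
          · rw [min_eq_right h]; nlinarith [(hl n).1, (hl n).2]
        have hmin0 : 0 ≤ min (l n) (1 - l n) := le_min (hl n).1 (by linarith [(hl n).2])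
        rw [hrec n]
        have c1 := mul_le_mul_of_nonneg_left h2r (mul_nonneg (hgnn n) hηb.le)
        have c2 := mul_le_mul_of_nonneg_right hminge (mul_nonneg hηb.le hrpos.le)
        have c3 := mul_le_mul_of_nonneg_right hmon'
          (mul_nonneg hmin0 hrpos.le)
        nlinarith [huc, c1, c2, c3]
      have htel : ∀ j, K + j ≤ Nb + 1 →
          (∑ n ∈ Finset.Ico K (K+j), (l n * (1 - l n)) * (η b ε₀ * ε'))
            + dist (xs (K+j)) p ≤ dist (xs K) p := by
        intro j
        induction j with
        | zero => intro _; simp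
        | succ j ih =>
          intro hj
          have hKj : K + j ≤ Nb := by omega
          have hs' := hstep (K+j) (Nat.le_add_right _ _) hKj
          have hrw : K + (j+1) = (K+j) + 1 := rfl
          rw [hrw, Finset.sum_Ico_succ_top (Nat.le_add_right K j)]
          have := ih (by omega)
          linarith
      have hKNb : K ≤ Nb + 1 := by
        by_contra hlt
        push_neg at hlt
        have hsub : Finset.range (Nb+1) ⊆ Finset.range K :=
          Finset.range_subset_range.mpr (by omega)
        have h1 := Finset.sum_le_sum_of_subset_of_nonneg hsub
          (fun i hi _ => hgnn i)
        have h3 := hθ (M+K)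
        have hM1 : 1 ≤ M := Nat.ceil_pos.mpr (by positivity)
        have h2 := hrangeK K
        have hcast : ((M+K : ℕ) : ℝ) = (M:ℝ) + (K:ℝ) := by push_cast; ring
        rw [hcast] at h3
        have : (1:ℝ) ≤ (M:ℝ) := by exact_mod_cast hM1
        rw [← hNbdef] at h3
        linarith
      have htelNb := htel (Nb + 1 - K) (by omega)
      rw [Nat.add_sub_cancel' hKNb] at htelNb
      have hsumM : (M:ℝ) ≤ ∑ n ∈ Finset.Ico K (Nb+1), l n * (1 - l n) := by
        have h3 := hθ (M+K)
        have h2 := hrangeK K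
        have hsplit := Finset.sum_range_add_sum_Ico (fun i => l i * (1 - l i)) hKNb
        have hcast : ((M+K : ℕ) : ℝ) = (M:ℝ) + (K:ℝ) := by push_cast; ring
        rw [hcast] at h3
        rw [← hNbdef] at h3
        linarith
      have hc : 0 < η b ε₀ * ε' := mul_pos hηb hε'
      have hsum_eq : ∑ n ∈ Finset.Ico K (Nb+1), (l n * (1-l n)) * (η b ε₀ * ε')
          = (∑ n ∈ Finset.Ico K (Nb+1), l n * (1-l n)) * (η b ε₀ * ε') :=
        (Finset.sum_mul _ _ _).symm
      have hMc : b + 1 ≤ (M:ℝ) * (η b ε₀ * ε') := by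
        have hceil := Nat.le_ceil ((b+1)/(ε' * η b ε₀))
        rw [← hM] at hceil
        rw [div_le_iff₀ (by positivity)] at hceil
        nlinarith [hceil]
      have h7 : (M:ℝ) * (η b ε₀ * ε')
          ≤ (∑ n ∈ Finset.Ico K (Nb+1), l n * (1-l n)) * (η b ε₀ * ε') :=
        mul_le_mul_of_nonneg_right hsumM hc.le
      have hdist0 : (0:ℝ) ≤ dist (xs (Nb+1)) p := dist_nonneg
      have hKb := hpball K
      rw [hsum_eq] at htelNb
      linarith
    · refine ⟨k + N₀, Nat.le_add_right _ _, ?_, ?_⟩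
      · rw [hRate, if_neg hcase]
      · have hd : ε / (L:ℝ) ≤ ε := div_le_self hε.le (by exact_mod_cast hL)
        push_neg at hcase
        linarith [hfle (k+N₀)]
  refine ⟨main, ?_⟩
  have hbdd : IsBoundedUnder (· ≥ ·) atTop (fun n => dist (xs n) (T (xs n))) :=
    ⟨0, Filter.eventually_map.mpr (Filter.Eventually.of_forall fun n => dist_nonneg)⟩
  apply le_antisymm
  · apply le_of_forall_pos_le_add
    intro ε hεp
    have hfreq : ∃ᶠ n in atTop, dist (xs n) (T (xs n)) ≤ 0 + ε := by
      rw [Filter.frequently_atTop]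
      intro k
      obtain ⟨N, hN1, _, hN3⟩ := main ε hεp k
      exact ⟨N, hN1, by linarith⟩
    exact Filter.liminf_le_of_frequently_le hfreq hbdd
  · apply Filter.le_liminf_of_le
    · exact (Filter.isBoundedUnder_of
        ⟨2*b, fun n => hfle n⟩ : IsBoundedUnder (· ≤ ·) atTop _).isCoboundedUnder_ge
    · exact Filter.Eventually.of_forall fun n => dist_nonneg
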